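/- arXiv:2306.03775 — 3 statements merged into one kernel-verified Lean document; each statement's English description precedes it below -/
import Mathlib

section
/- Let s : I → ℝ be injective on a finite set I, g : I → Bool, α > 0, and s̃(i) = s(i) + α·𝟙[g(i)]. Suppose every pair (i_g, i_{¬g}) with g(i_g) = true, g(i_{¬g}) = false, and 0 ≤ s(i_{¬g}) − s(i_g) ≤ α satisfies v(i_g) > v(i_{¬g}), where v : I → ℝ are item values. Then for any strictly decreasing position weights w, the value of the ranking induced by s̃ strictly exceeds the value of the ranking induced by s, provided at least one such misranked pair exists. (Deterministic version of the matched pair calibration marginal outcome test.) -/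
/-- The inversion set of a permutation of `Fin n`. -/
def mpbivInvs {n : ℕ} (τ : Equiv.Perm (Fin n)) : Finset (Fin n × Fin n) :=
  Finset.univ.filter fun kl => kl.1 < kl.2 ∧ τ kl.2 < τ kl.1

lemma mpbiv_swap_adj_lt {n : ℕ} (τ : Equiv.Perm (Fin n)) (a b : Fin n) (hab : a < b)
    (hadj : (τ a).val = (τ b).val + 1) (c d : Fin n) (hcd : c < d)
    (h : (τ.trans (Equiv.swap (τ a) (τ b))) d < (τ.trans (Equiv.swap (τ a) (τ b))) c) :
    τ d < τ c := by
  have hne : (τ c).val ≠ (τ d).val := by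
    intro h'
    exact absurd (τ.injective (Fin.ext h')) hcd.ne
  have hba : ¬((τ c).val = (τ b).val ∧ (τ d).val = (τ a).val) := by
    rintro ⟨h1, h2⟩
    have hc : c = b := τ.injective (Fin.ext h1)
    have hd : d = a := τ.injective (Fin.ext h2)
    rw [hc, hd] at hcd
    exact absurd hcd (not_lt.2 hab.le)
  simp only [Equiv.trans_apply, Equiv.swap_apply_def] at h
  split_ifs at h <;> simp only [Fin.ext_iff] at * <;> fin_omega

lemma mpbiv_exists_adj {n : ℕ} (τ : Equiv.Perm (Fin n))
    (hinv : ∃ k l : Fin n, k < l ∧ τ l < τ k) :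
    ∃ a b : Fin n, a < b ∧ (τ a).val = (τ b).val + 1 := by
  by_contra hcon
  push_neg at hcon
  have step : ∀ x y : Fin n, (y : ℕ) = (x : ℕ) + 1 → τ.symm x < τ.symm y := by
    intro x y hxy
    rcases lt_trichotomy (τ.symm x) (τ.symm y) with h | h | h
    · exact h
    · have : x = y := by
        have := congrArg τ h
        simpa using this
      exact absurd this (by intro h'; rw [h'] at hxy; omega)
    · have := hcon _ _ h
      rw [Equiv.apply_symm_apply, Equiv.apply_symm_apply] at this
      omega
  have mono : StrictMono ⇑τ.symm := by
    intro x y hxy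
    have hxy' : (x : ℕ) < (y : ℕ) := hxy
    obtain ⟨d, hd⟩ := Nat.exists_eq_add_of_lt hxy'
    clear hxy hxy'
    induction d generalizing y with
    | zero => exact step x y (by omega)
    | succ d ihd =>
        have hz : (x : ℕ) + d + 1 < n := by have := y.isLt; omega
        have h1 := @ihd ⟨(x : ℕ) + d + 1, hz⟩ rfl
        have h2 := step ⟨(x : ℕ) + d + 1, hz⟩ y (by simp; omega)
        exact h1.trans h2
  obtain ⟨k, l, hkl, hlt⟩ := hinv
  have := mono hlt
  simp only [Equiv.symm_apply_apply] at this
  exact absurd hkl (not_lt.2 this.le)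

lemma mpbiv_sum_split {n : ℕ} (a b : Fin n) (hab : a ≠ b) (u : Fin n → ℝ) :
    ∑ k, u k = u a + (u b + ∑ k ∈ (Finset.univ.erase a).erase b, u k) := by
  rw [Finset.add_sum_erase _ u (Finset.mem_erase.2 ⟨Ne.symm hab, Finset.mem_univ b⟩),
    Finset.add_sum_erase _ u (Finset.mem_univ a)]

lemma mpbiv_step {n : ℕ} (w : Fin n → ℝ) (hw : StrictAnti w) (τ : Equiv.Perm (Fin n))
    (f : Fin n → ℝ) (hf : ∀ k l : Fin n, k < l → τ l < τ k → f l < f k)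
    (hinv : ∃ k l : Fin n, k < l ∧ τ l < τ k) :
    ∃ τ' : Equiv.Perm (Fin n),
      (∀ k l : Fin n, k < l → τ' l < τ' k → τ l < τ k) ∧
      (mpbivInvs τ').card < (mpbivInvs τ).card ∧
      ∑ k, w (τ k) * f k < ∑ k, w (τ' k) * f k := by
  obtain ⟨a, b, hab, hadj⟩ := mpbiv_exists_adj τ hinv
  have htba : τ b < τ a := by rw [Fin.lt_def]; omega
  set τ' := τ.trans (Equiv.swap (τ a) (τ b)) with hτ'
  have hC1 : ∀ k l : Fin n, k < l → τ' l < τ' k → τ l < τ k :=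
    mpbiv_swap_adj_lt τ a b hab hadj
  have hτ'a : τ' a = τ b := by simp [hτ', Equiv.swap_apply_left]
  have hτ'b : τ' b = τ a := by simp [hτ', Equiv.swap_apply_right]
  refine ⟨τ', hC1, ?_, ?_⟩
  · apply Finset.card_lt_card
    constructor
    · intro kl hkl
      rw [mpbivInvs, Finset.mem_filter] at *
      exact ⟨hkl.1, hkl.2.1, hC1 _ _ hkl.2.1 hkl.2.2⟩
    · intro hall
      have hmem : (a, b) ∈ mpbivInvs τ := by
        rw [mpbivInvs, Finset.mem_filter]
        exact ⟨Finset.mem_univ _, hab, htba⟩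
      have := hall hmem
      rw [mpbivInvs, Finset.mem_filter] at this
      have h2 := this.2.2
      rw [hτ'a, hτ'b] at h2
      exact absurd h2 (not_lt.2 htba.le)
  · have hoth : ∀ k : Fin n, k ≠ a → k ≠ b → τ' k = τ k := by
      intro k hka hkb
      simp only [hτ', Equiv.trans_apply]
      exact Equiv.swap_apply_of_ne_of_ne (fun h => hka (τ.injective h))
        (fun h => hkb (τ.injective h))
    rw [mpbiv_sum_split a b hab.ne (fun k => w (τ k) * f k),
      mpbiv_sum_split a b hab.ne (fun k => w (τ' k) * f k)]
    have htail : ∑ k ∈ (Finset.univ.erase a).erase b, w (τ' k) * f k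
        = ∑ k ∈ (Finset.univ.erase a).erase b, w (τ k) * f k := by
      refine Finset.sum_congr rfl fun k hk => ?_
      rw [Finset.mem_erase, Finset.mem_erase] at hk
      rw [hoth k hk.2.1 hk.1]
    rw [hτ'a, hτ'b, htail]
    have hw1 : w (τ a) < w (τ b) := hw htba
    have hf1 : f b < f a := hf a b hab htba
    nlinarith [mul_pos (sub_pos.2 hw1) (sub_pos.2 hf1)]

lemma mpbiv_key {n : ℕ} (w : Fin n → ℝ) (hw : StrictAnti w) :
    ∀ (N : ℕ) (τ : Equiv.Perm (Fin n)) (f : Fin n → ℝ),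
      (mpbivInvs τ).card ≤ N →
      (∀ k l : Fin n, k < l → τ l < τ k → f l < f k) →
      ∑ k, w (τ k) * f k ≤ ∑ k, w k * f k := by
  have base : ∀ (τ : Equiv.Perm (Fin n)) (f : Fin n → ℝ),
      (¬∃ k l : Fin n, k < l ∧ τ l < τ k) →
      ∑ k, w (τ k) * f k = ∑ k, w k * f k := by
    intro τ f hno
    have hmono : StrictMono ⇑τ := by
      intro k l hkl
      rcases lt_trichotomy (τ k) (τ l) with h | h | h
      · exact h
      · exact absurd (τ.injective h) hkl.ne
      · exact absurd ⟨k, l, hkl, h⟩ hno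
    have hwf : WellFoundedLT (Fin n) := inferInstance
    have hid : ⇑τ = id := (StrictMono.range_inj hmono (strictMono_id (α := Fin n))).1
      (by rw [Set.range_id, Equiv.range_eq_univ])
    rw [hid]; rfl
  intro N
  induction N with
  | zero =>
      intro τ f hcard hf
      refine le_of_eq (base τ f ?_)
      rintro ⟨k, l, hkl, hlt⟩
      have : (k, l) ∈ mpbivInvs τ := by
        rw [mpbivInvs, Finset.mem_filter]
        exact ⟨Finset.mem_univ _, hkl, hlt⟩
      have := Finset.card_pos.2 ⟨_, this⟩
      omega
  | succ N ih =>
      intro τ f hcard hf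
      by_cases hinv : ∃ k l : Fin n, k < l ∧ τ l < τ k
      · obtain ⟨τ', hC1, hcard', hlt⟩ := mpbiv_step w hw τ f hf hinv
        have hf' : ∀ k l : Fin n, k < l → τ' l < τ' k → f l < f k :=
          fun k l h1 h2 => hf k l h1 (hC1 k l h1 h2)
        exact hlt.le.trans (ih τ' f (by omega) hf')
      · exact le_of_eq (base τ f hinv)

lemma mpbiv_key_strict {n : ℕ} (w : Fin n → ℝ) (hw : StrictAnti w)
    (τ : Equiv.Perm (Fin n)) (f : Fin n → ℝ)
    (hf : ∀ k l : Fin n, k < l → τ l < τ k → f l < f k)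
    (hinv : ∃ k l : Fin n, k < l ∧ τ l < τ k) :
    ∑ k, w (τ k) * f k < ∑ k, w k * f k := by
  obtain ⟨τ', hC1, hcard', hlt⟩ := mpbiv_step w hw τ f hf hinv
  have hf' : ∀ k l : Fin n, k < l → τ' l < τ' k → f l < f k :=
    fun k l h1 h2 => hf k l h1 (hC1 k l h1 h2)
  exact hlt.trans_le (mpbiv_key w hw (mpbivInvs τ').card τ' f le_rfl hf')

/-- Deterministic matched pair calibration marginal outcome test: if every matched pair
`(i_g, i_{¬g})` with `0 ≤ s i_{¬g} - s i_g ≤ α` satisfies `v i_g > v i_{¬g}`, and at least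
one pair is misranked by the boost, then the boosted ranking has strictly greater value. -/
theorem matched_pair_boost_improves_value {I : Type*} [Fintype I] {n : ℕ}
    (hn : Fintype.card I = n)
    (s v : I → ℝ) (hs : Function.Injective s) (g : I → Bool) (α : ℝ) (hα : 0 < α)
    (st : I → ℝ) (hst : ∀ i, st i = s i + α * (if g i then 1 else 0))
    (hst_inj : Function.Injective st)
    (w : Fin n → ℝ) (hw : StrictAnti w)
    (p q : I ≃ Fin n)
    (hp : ∀ i i' : I, s i' < s i ↔ p i < p i')
    (hq : ∀ i i' : I, st i' < st i ↔ q i < q i')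
    (hv : ∀ ig ing : I, g ig = true → g ing = false →
      0 ≤ s ing - s ig → s ing - s ig ≤ α → v ing < v ig)
    (hex : ∃ i i' : I, s i < s i' ∧ st i' < st i) :
    (∑ i, w (p i) * v i) < (∑ i, w (q i) * v i) := by

  classical
  set σ : Equiv.Perm (Fin n) := q.symm.trans p with hσ
  set f : Fin n → ℝ := fun k => v (q.symm k) with hfdef
  have h1 : ∑ i, w (p i) * v i = ∑ k, w (σ k) * f k :=
    Fintype.sum_equiv q _ _ (fun i => by simp [hσ, hfdef])
  have h2 : ∑ i, w (q i) * v i = ∑ k, w k * f k :=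
    Fintype.sum_equiv q _ _ (fun i => by simp [hfdef])
  rw [h1, h2]
  apply mpbiv_key_strict w hw σ f
  · intro k l hkl hlt
    set i := q.symm k with hi
    set i' := q.symm l with hi'
    have hqi : q i = k := q.apply_symm_apply k
    have hqi' : q i' = l := q.apply_symm_apply l
    have hst1 : st i' < st i := (hq i i').mpr (by rw [hqi, hqi']; exact hkl)
    have hs1 : s i < s i' := (hp i' i).mpr (by simpa [hσ, hi, hi'] using hlt)
    have hgi : g i = true := by
      cases hgi : g i with
      | true => rfl
      | false =>
        exfalso
        rw [hst i, hst i', hgi] at hst1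
        simp only [Bool.false_eq_true, if_false, mul_zero, add_zero] at hst1
        have hnn : (0:ℝ) ≤ α * (if g i' then (1:ℝ) else 0) := by
          split_ifs <;> simp [hα.le]
        linarith
    have hgi' : g i' = false := by
      cases hgi' : g i' with
      | false => rfl
      | true =>
        exfalso
        rw [hst i, hst i', hgi, hgi'] at hst1
        simp only [if_true, mul_one] at hst1
        linarith
    have hle : s i' - s i ≤ α := by
      rw [hst i, hst i', hgi, hgi'] at hst1
      simp only [if_true, Bool.false_eq_true, if_false, mul_one, mul_zero, add_zero] at hst1
      linarith
    exact hv i i' hgi hgi' (by linarith) hle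
  · obtain ⟨i, i', hs1, hst1⟩ := hex
    refine ⟨q i, q i', (hq i i').mp hst1, ?_⟩
    have hpi : p i' < p i := (hp i' i).mp hs1
    simpa [hσ] using hpi
end

section
/- Under a group boost s̃(i) = s(i) + α·𝟙[g(i)] with s and s̃ injective, the position of each item under s̃ differs from its position under s by at most the number of items of the opposite group whose score lies within distance α of its own score. Precisely, for any item i, |rank_{s̃}(i) − rank_s(i)| ≤ |{i' : g(i') ≠ g(i) and |s(i') − s(i)| ≤ α}|. -/
/-- The position of an item changes under the group boost by at most the number of items of
the opposite group whose score lies within `α` of its own score. -/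
theorem boost_rank_shift_bound {I : Type*} [Fintype I] [DecidableEq I]
    (s : I → ℝ) (hs : Function.Injective s) (g : I → Bool) (α : ℝ) (hα : 0 < α)
    (st : I → ℝ) (hst : ∀ i, st i = s i + α * (if g i then 1 else 0))
    (hst_inj : Function.Injective st) (i : I) :
    |((Finset.univ.filter (fun i' => st i < st i')).card : ℤ)
        - ((Finset.univ.filter (fun i' => s i < s i')).card : ℤ)|
      ≤ ((Finset.univ.filter (fun i' => g i' ≠ g i ∧ |s i' - s i| ≤ α)).card : ℤ) := by
  classical
  set A := Finset.univ.filter (fun i' => st i < st i') with hA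
  set B := Finset.univ.filter (fun i' => s i < s i') with hB
  set C := Finset.univ.filter (fun i' => g i' ≠ g i ∧ |s i' - s i| ≤ α) with hC
  have hAB : A \ B ⊆ C := by
    intro j hj
    simp only [hA, hB, hC, Finset.mem_sdiff, Finset.mem_filter, Finset.mem_univ, true_and,
      not_lt] at hj ⊢
    obtain ⟨h1, h2⟩ := hj
    have hij : j ≠ i := by rintro rfl; exact lt_irrefl _ h1
    have hlt : s j < s i := lt_of_le_of_ne h2 (fun h => hij (hs h))
    rw [hst i, hst j] at h1
    constructor
    · intro hg
      rw [hg] at h1; linarith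
    · rw [abs_le]
      constructor
      · by_cases hgj : g j <;> by_cases hgi : g i <;> simp [hgj, hgi] at h1 <;> linarith
      · linarith
  have hBA : B \ A ⊆ C := by
    intro j hj
    simp only [hA, hB, hC, Finset.mem_sdiff, Finset.mem_filter, Finset.mem_univ, true_and,
      not_lt] at hj ⊢
    obtain ⟨h1, h2⟩ := hj
    rw [hst i, hst j] at h2
    constructor
    · intro hg
      rw [hg] at h2; linarith
    · rw [abs_le]
      constructor
      · linarith
      · by_cases hgj : g j <;> by_cases hgi : g i <;> simp [hgj, hgi] at h2 <;> linarith
  have c1 : A.card ≤ B.card + (A \ B).card := by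
    calc A.card ≤ (B ∪ A \ B).card := Finset.card_le_card (by
          intro x hx
          by_cases hxB : x ∈ B
          · exact Finset.mem_union_left _ hxB
          · exact Finset.mem_union_right _ (Finset.mem_sdiff.mpr ⟨hx, hxB⟩))
      _ ≤ B.card + (A \ B).card := Finset.card_union_le _ _
  have c2 : B.card ≤ A.card + (B \ A).card := by
    calc B.card ≤ (A ∪ B \ A).card := Finset.card_le_card (by
          intro x hx
          by_cases hxA : x ∈ A
          · exact Finset.mem_union_left _ hxA
          · exact Finset.mem_union_right _ (Finset.mem_sdiff.mpr ⟨hx, hxA⟩))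
      _ ≤ A.card + (B \ A).card := Finset.card_union_le _ _
  have d1 : (A \ B).card ≤ C.card := Finset.card_le_card hAB
  have d2 : (B \ A).card ≤ C.card := Finset.card_le_card hBA
  rw [abs_le]
  constructor <;> [skip; skip] <;> push_cast <;> omega
end

section
/- Let r₀, r₁, …, r_K be a sequence of rankings (bijections I ≃ Fin n) such that each r_{k+1} differs from r_k by transposing the positions of one group-g item i_g[k] and one non-group-g item i_{¬g}[k], where i_{¬g}[k] occupies the higher position in r_k. If the position weights w are strictly decreasing and v(i_g[k]) > v(i_{¬g}[k]) for every k, then V(r_K) − V(r_0) = ∑_{k=1}^{K} (w_k⁺ − w_k⁻)·(v(i_g[k]) − v(i_{¬g}[k])) > 0, where w_k⁺ and w_k⁻ are the weights of the higher and lower positions involved in the k-th swap. -/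
/-- For a sequence of rankings in which each step swaps a group-`g` item with a higher-ranked
non-group item of strictly smaller value, the total value change telescopes into a sum of
strictly positive swap contributions. -/
theorem swap_sequence_value_positive {I : Type*} [Fintype I] [DecidableEq I] {n K : ℕ}
    (hK : 0 < K) (w : Fin n → ℝ) (hw : StrictAnti w) (v : I → ℝ) (g : I → Bool)
    (r : ℕ → I ≃ Fin n) (ig ing : Fin K → I)
    (hgig : ∀ k : Fin K, g (ig k) = true) (hging : ∀ k : Fin K, g (ing k) = false)
    (hswap : ∀ k : Fin K,
      r ((k : ℕ) + 1) = (Equiv.swap (ig k) (ing k)).trans (r (k : ℕ)))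
    (horder : ∀ k : Fin K, r (k : ℕ) (ing k) < r (k : ℕ) (ig k))
    (hval : ∀ k : Fin K, v (ing k) < v (ig k)) :
    (∑ a, w (r K a) * v a) - (∑ a, w (r 0 a) * v a)
        = ∑ k : Fin K,
            (w (r (k : ℕ) (ing k)) - w (r (k : ℕ) (ig k))) * (v (ig k) - v (ing k)) ∧
      0 < (∑ a, w (r K a) * v a) - (∑ a, w (r 0 a) * v a) := by
  have hne : ∀ k : Fin K, ig k ≠ ing k := by
    intro k h
    have h1 := hgig k
    rw [h, hging k] at h1
    exact absurd h1 (by simp)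
  set F : ℕ → ℝ := fun m => ∑ a, w (r m a) * v a with hF
  have hstep : ∀ k : Fin K, F ((k : ℕ) + 1) - F (k : ℕ)
      = (w (r (k : ℕ) (ing k)) - w (r (k : ℕ) (ig k))) * (v (ig k) - v (ing k)) := by
    intro k
    have h1 : F ((k : ℕ) + 1) - F (k : ℕ)
        = ∑ a, (w (r ((k : ℕ) + 1) a) - w (r (k : ℕ) a)) * v a := by
      simp [F, sub_mul, Finset.sum_sub_distrib]
    rw [h1]
    have h2 : ∑ a, (w (r ((k : ℕ) + 1) a) - w (r (k : ℕ) a)) * v a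
        = ∑ a ∈ ({ig k, ing k} : Finset I),
            (w (r ((k : ℕ) + 1) a) - w (r (k : ℕ) a)) * v a := by
      refine (Finset.sum_subset (Finset.subset_univ _) ?_).symm
      intro a _ ha
      simp only [Finset.mem_insert, Finset.mem_singleton, not_or] at ha
      rw [hswap k]
      simp [Equiv.swap_apply_of_ne_of_ne ha.1 ha.2]
    rw [h2, Finset.sum_pair (hne k), hswap k]
    simp only [Equiv.trans_apply, Equiv.swap_apply_left, Equiv.swap_apply_right]
    ring
  have htel : F K - F 0 = ∑ k ∈ Finset.range K, (F (k + 1) - F k) :=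
    (Finset.sum_range_sub F K).symm
  have hsum : F K - F 0 = ∑ k : Fin K,
      (w (r (k : ℕ) (ing k)) - w (r (k : ℕ) (ig k))) * (v (ig k) - v (ing k)) := by
    rw [htel, ← Fin.sum_univ_eq_sum_range (fun i => F (i + 1) - F i) K]
    exact Finset.sum_congr rfl fun k _ => hstep k
  refine ⟨hsum, ?_⟩
  rw [hsum]
  apply Finset.sum_pos
  · intro k _
    apply mul_pos
    · exact sub_pos.mpr (hw (horder k))
    · exact sub_pos.mpr (hval k)
  · exact Finset.univ_nonempty_iff.mpr ⟨⟨0, hK⟩⟩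
end
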